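/- Fix T > 0, σ ∈ ℝ, R ∈ (0,1], and let α(t) = λ e^{-ρ t} + (1-λ) e^{-γ t} with γ > ρ > 0 and λ ∈ (0,1). Let P : Δ[0,T] → ℝ be the continuous, s-differentiable solution of the equilibrium Riccati equation ∂_s P(t,s) + (σ² - 2((1-R)/R) P(s,s)) P(t,s) + α(s-t) ((1-R)/R) P(s,s)² = 0, P(t,T) = α(T-t), on Δ[0,T] = {(t,s) : 0 ≤ t ≤ s ≤ T}. Then there exists a constant K > 0 such that for every t ∈ [0,T), every ε ∈ (0, T-t], and every differentiable function Pᵗ : [t, t+ε] → ℝ satisfying the Riccati equation (Pᵗ)'(s) + σ² Pᵗ(s) - ((1-R)/(α(s-t) R)) Pᵗ(s)² = 0 on [t, t+ε] with terminal condition Pᵗ(t+ε) = P(t, t+ε), one has |Pᵗ(s) - P(t,s)| ≤ K ε and |Pᵗ(s) - P(s,s)| ≤ K ε for all s ∈ [t, t+ε], and |Pᵗ(t) - P(t,t)| ≤ K ε². -/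

import Mathlib

open Real Set

/-- `P` (with `s`-partial derivative `Ps`) is a continuous solution, on
`Δ[0,T] = {(t,s) : 0 ≤ t ≤ s ≤ T}`, of the equilibrium Riccati equation
`∂ₛP(t,s) + (σ² - 2((1-R)/R) P(s,s)) P(t,s) + α(s-t) ((1-R)/R) P(s,s)² = 0`
with terminal condition `P(t,T) = α(T-t)`. -/
def IsERESolution (T σ R : ℝ) (α : ℝ → ℝ) (P Ps : ℝ → ℝ → ℝ) : Prop :=
  ContinuousOn (fun p : ℝ × ℝ => P p.1 p.2)
    {p : ℝ × ℝ | 0 ≤ p.1 ∧ p.1 ≤ p.2 ∧ p.2 ≤ T} ∧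
  (∀ t ∈ Set.Icc (0 : ℝ) T, ∀ s ∈ Set.Icc t T,
    HasDerivWithinAt (P t) (Ps t s) (Set.Icc t T) s ∧
    Ps t s + (σ ^ 2 - 2 * ((1 - R) / R) * P s s) * P t s
      + α (s - t) * (((1 - R) / R) * (P s s) ^ 2) = 0) ∧
  (∀ t ∈ Set.Icc (0 : ℝ) T, P t T = α (T - t))

private lemma abs_exp_sub_exp_le {a b : ℝ} (ha : a ≤ 0) (hb : b ≤ 0) :
    |Real.exp a - Real.exp b| ≤ |a - b| := by
  wlog h : b ≤ a generalizing a b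
  · rw [abs_sub_comm, abs_sub_comm a b]; exact this hb ha (le_of_not_ge h)
  have hea : Real.exp a ≤ 1 := Real.exp_le_one_iff.mpr ha
  have h2 : Real.exp a * ((b - a) + 1) ≤ Real.exp b := by
    calc Real.exp a * ((b - a) + 1) ≤ Real.exp a * Real.exp (b - a) :=
          mul_le_mul_of_nonneg_left (Real.add_one_le_exp (b - a)) (Real.exp_pos a).le
    _ = Real.exp b := by rw [← Real.exp_add]; ring_nf
  have h4 : Real.exp b ≤ Real.exp a := Real.exp_le_exp.mpr h
  rw [abs_of_nonneg (by linarith), abs_of_nonneg (by linarith : (0:ℝ) ≤ a - b)]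
  nlinarith [Real.exp_pos a]

private lemma gronwallBound_le_simple {δ K e x : ℝ} (hK : 0 < K) (hδ : 0 ≤ δ)
    (he : 0 ≤ e) (hx : 0 ≤ x) :
    gronwallBound δ K e x ≤ (δ + e * x) * Real.exp (K * x) := by
  rw [gronwallBound_of_K_ne_0 hK.ne']
  have h3 : Real.exp (-(K * x)) * Real.exp (K * x) = 1 := by rw [← Real.exp_add]; simp
  have h1 := Real.add_one_le_exp (-(K * x))
  have h2 : Real.exp (K * x) - 1 ≤ K * x * Real.exp (K * x) := by
    nlinarith [Real.exp_pos (K * x)]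
  have h4 : e / K * (Real.exp (K * x) - 1) ≤ e * x * Real.exp (K * x) := by
    rw [div_mul_eq_mul_div, div_le_iff₀ hK]
    calc e * (Real.exp (K * x) - 1) ≤ e * (K * x * Real.exp (K * x)) :=
          mul_le_mul_of_nonneg_left h2 he
    _ = e * x * Real.exp (K * x) * K := by ring
  nlinarith [Real.exp_pos (K * x)]

private lemma gronwall_backward {f f' : ℝ → ℝ} {a b δ K ε : ℝ}
    (hab : a ≤ b)
    (hf : ∀ x ∈ Set.Icc a b, HasDerivWithinAt f (f' x) (Set.Icc a b) x)
    (hfb : |f b| ≤ δ)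
    (bound : ∀ x ∈ Set.Icc a b, |f' x| ≤ K * |f x| + ε) :
    ∀ x ∈ Set.Icc a b, |f x| ≤ gronwallBound δ K ε (b - x) := by
  have hmap : ∀ u ∈ Set.Icc a b, a + b - u ∈ Set.Icc a b := by
    intro u hu; exact ⟨by linarith [hu.2], by linarith [hu.1]⟩
  have hg : ∀ u ∈ Set.Icc a b,
      HasDerivWithinAt (fun u => f (a + b - u)) (-(f' (a + b - u))) (Set.Icc a b) u := by
    intro u hu
    have hinner : HasDerivWithinAt (fun u : ℝ => a + b - u) (-1) (Set.Icc a b) u :=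
      ((hasDerivAt_id u).const_sub (a + b)).hasDerivWithinAt
    have h2 := (hf _ (hmap u hu)).comp u hinner (fun x hx => hmap x hx)
    simpa [Function.comp_def] using h2
  have hgc : ContinuousOn (fun u => f (a + b - u)) (Set.Icc a b) :=
    fun u hu => (hg u hu).continuousWithinAt
  have key := norm_le_gronwallBound_of_norm_deriv_right_le (f := fun u => f (a + b - u))
      (f' := fun u => -(f' (a + b - u))) (δ := δ) (K := K) (ε := ε) (a := a) (b := b)
      hgc
      (fun x hx => (hg x ⟨hx.1, hx.2.le⟩).mono_of_mem_nhdsWithin (Icc_mem_nhdsGE_of_mem hx))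
      (by simpa [Real.norm_eq_abs] using hfb)
      (fun x hx => by
        simpa [Real.norm_eq_abs] using bound (a + b - x) (hmap x ⟨hx.1, hx.2.le⟩))
  intro x hx
  have := key (a + b - x) (hmap x hx)
  have e1 : a + b - (a + b - x) = x := by ring
  have e2 : a + b - x - a = b - x := by ring
  simpa [Real.norm_eq_abs, e1, e2] using this

private lemma antitoneOn_mul_exp {f f' : ℝ → ℝ} {a b Kb : ℝ}
    (hf : ∀ x ∈ Set.Icc a b, HasDerivWithinAt f (f' x) (Set.Icc a b) x)
    (hle : ∀ x ∈ Set.Ioo a b, f' x ≤ Kb * f x) :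
    AntitoneOn (fun s => f s * Real.exp (-Kb * s)) (Set.Icc a b) := by
  refine antitoneOn_of_hasDerivWithinAt_nonpos (convex_Icc a b)
    (f' := fun x => (f' x - Kb * f x) * Real.exp (-Kb * x)) ?_ ?_ ?_
  · exact fun u hu => ((hf u hu).continuousWithinAt.mul
      ((Real.continuous_exp.comp (continuous_const.mul continuous_id)).continuousWithinAt))
  · intro x hx
    rw [interior_Icc] at hx ⊢
    have hfx : HasDerivWithinAt f (f' x) (Set.Ioo a b) x :=
      (hf x (Set.Ioo_subset_Icc_self hx)).mono Set.Ioo_subset_Icc_self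
    have hexp : HasDerivWithinAt (fun s : ℝ => Real.exp (-Kb * s))
        (Real.exp (-Kb * x) * (-Kb)) (Set.Ioo a b) x := by
      have h1 : HasDerivAt (fun s : ℝ => -Kb * s) (-Kb) x := by
        simpa using (hasDerivAt_id x).const_mul (-Kb)
      exact (h1.exp).hasDerivWithinAt
    have := hfx.mul hexp
    exact this.congr_deriv (by ring)
  · intro x hx
    rw [interior_Icc] at hx
    have h1 : f' x - Kb * f x ≤ 0 := by linarith [hle x hx]
    exact mul_nonpos_of_nonpos_of_nonneg h1 (Real.exp_pos _).le

private lemma monotoneOn_mul_exp {f f' : ℝ → ℝ} {a b Kb : ℝ}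
    (hf : ∀ x ∈ Set.Icc a b, HasDerivWithinAt f (f' x) (Set.Icc a b) x)
    (hge : ∀ x ∈ Set.Ioo a b, Kb * f x ≤ f' x) :
    MonotoneOn (fun s => f s * Real.exp (-Kb * s)) (Set.Icc a b) := by
  refine monotoneOn_of_hasDerivWithinAt_nonneg (convex_Icc a b)
    (f' := fun x => (f' x - Kb * f x) * Real.exp (-Kb * x)) ?_ ?_ ?_
  · exact fun u hu => ((hf u hu).continuousWithinAt.mul
      ((Real.continuous_exp.comp (continuous_const.mul continuous_id)).continuousWithinAt))
  · intro x hx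
    rw [interior_Icc] at hx ⊢
    have hfx : HasDerivWithinAt f (f' x) (Set.Ioo a b) x :=
      (hf x (Set.Ioo_subset_Icc_self hx)).mono Set.Ioo_subset_Icc_self
    have hexp : HasDerivWithinAt (fun s : ℝ => Real.exp (-Kb * s))
        (Real.exp (-Kb * x) * (-Kb)) (Set.Ioo a b) x := by
      have h1 : HasDerivAt (fun s : ℝ => -Kb * s) (-Kb) x := by
        simpa using (hasDerivAt_id x).const_mul (-Kb)
      exact (h1.exp).hasDerivWithinAt
    have := hfx.mul hexp
    exact this.congr_deriv (by ring)
  · intro x hx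
    rw [interior_Icc] at hx
    have h1 : 0 ≤ f' x - Kb * f x := by linarith [hge x hx]
    exact mul_nonneg h1 (Real.exp_pos _).le

private lemma pos_on_of_riccati {f f' : ℝ → ℝ} {a b Kb : ℝ} (hab : a ≤ b)
    (hf : ∀ x ∈ Set.Icc a b, HasDerivWithinAt f (f' x) (Set.Icc a b) x)
    (hKb : ∀ x ∈ Set.Icc a b, 0 ≤ f x → f' x ≤ Kb * f x)
    (hfb : 0 < f b) : ∀ x ∈ Set.Icc a b, 0 < f x := by
  by_contra hcon
  push_neg at hcon
  obtain ⟨s0, hs0, hfs0⟩ := hcon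
  have hcont : ContinuousOn f (Set.Icc a b) := fun u hu => (hf u hu).continuousWithinAt
  have hS_closed : IsClosed (Set.Icc s0 b ∩ f ⁻¹' Set.Iic 0) :=
    (hcont.mono (Set.Icc_subset_Icc hs0.1 le_rfl)).preimage_isClosed_of_isClosed
      isClosed_Icc isClosed_Iic
  have hS_cpt : IsCompact (Set.Icc s0 b ∩ f ⁻¹' Set.Iic 0) :=
    isCompact_Icc.of_isClosed_subset hS_closed Set.inter_subset_left
  have hS_ne : (Set.Icc s0 b ∩ f ⁻¹' Set.Iic 0).Nonempty := ⟨s0, ⟨le_rfl, hs0.2⟩, hfs0⟩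
  set s1 := sSup (Set.Icc s0 b ∩ f ⁻¹' Set.Iic 0) with hs1_def
  have hs1S : s1 ∈ Set.Icc s0 b ∩ f ⁻¹' Set.Iic 0 := hS_cpt.sSup_mem hS_ne
  have hs1ab : s1 ∈ Set.Icc a b := ⟨hs0.1.trans hs1S.1.1, hs1S.1.2⟩
  have hfs1 : f s1 ≤ 0 := hs1S.2
  have hs1b : s1 < b := lt_of_le_of_ne hs1ab.2 (fun h => by rw [h] at hfs1; linarith)
  have hpos : ∀ x ∈ Set.Ioo s1 b, 0 < f x := by
    intro x hx
    by_contra hfx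
    push_neg at hfx
    have hxS : x ∈ Set.Icc s0 b ∩ f ⁻¹' Set.Iic 0 := ⟨⟨hs1S.1.1.trans hx.1.le, hx.2.le⟩, hfx⟩
    exact absurd (le_csSup hS_cpt.bddAbove hxS) (not_le.mpr hx.1)
  have hanti := antitoneOn_mul_exp (f := f) (f' := f') (a := s1) (b := b) (Kb := Kb)
    (fun x hx => (hf x ⟨hs1ab.1.trans hx.1, hx.2⟩).mono (Set.Icc_subset_Icc hs1ab.1 le_rfl))
    (fun x hx => hKb x ⟨hs1ab.1.trans hx.1.le, hx.2.le⟩ (hpos x hx).le)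
  have h := hanti (Set.left_mem_Icc.mpr hs1b.le) (Set.right_mem_Icc.mpr hs1b.le) hs1b.le
  have h1 : f s1 * Real.exp (-Kb * s1) ≤ 0 :=
    mul_nonpos_of_nonpos_of_nonneg hfs1 (Real.exp_pos _).le
  have h2 : f b * Real.exp (-Kb * b) ≤ f s1 * Real.exp (-Kb * s1) := h
  linarith [mul_pos hfb (Real.exp_pos (-Kb * b))]

set_option maxHeartbeats 2000000 in
/-- comparison estimates between the solution `P` of the
equilibrium Riccati equation and the local (constant-discount) Riccati solution
`Pᵗ` on a short interval `[t, t+ε]` with terminal value `Pᵗ(t+ε) = P(t,t+ε)`: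
`|Pᵗ(s) - P(t,s)| ≤ Kε`, `|Pᵗ(s) - P(s,s)| ≤ Kε` on `[t,t+ε]`, and
`|Pᵗ(t) - P(t,t)| ≤ Kε²`. -/
theorem ere_spike_variation_estimates
    (T σ R ρ γ l : ℝ) (hT : 0 < T) (hR0 : 0 < R) (hR1 : R ≤ 1)
    (hρ : 0 < ρ) (hργ : ρ < γ) (hl0 : 0 < l) (hl1 : l < 1)
    (α : ℝ → ℝ)
    (hα : α = fun t : ℝ => l * Real.exp (-ρ * t) + (1 - l) * Real.exp (-γ * t))
    (P Ps : ℝ → ℝ → ℝ)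
    (hP : IsERESolution T σ R α P Ps) :
    ∃ K : ℝ, 0 < K ∧
      ∀ t ∈ Set.Ico (0 : ℝ) T, ∀ ε ∈ Set.Ioc (0 : ℝ) (T - t),
        ∀ Pt Pt' : ℝ → ℝ,
          (∀ s ∈ Set.Icc t (t + ε),
            HasDerivWithinAt Pt (Pt' s) (Set.Icc t (t + ε)) s ∧
            Pt' s + σ ^ 2 * Pt s - ((1 - R) / (α (s - t) * R)) * (Pt s) ^ 2 = 0) →
          Pt (t + ε) = P t (t + ε) →
          (∀ s ∈ Set.Icc t (t + ε),
            |Pt s - P t s| ≤ K * ε ∧ |Pt s - P s s| ≤ K * ε) ∧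
          |Pt t - P t t| ≤ K * ε ^ 2 := by
  obtain ⟨hcont, heq, hterm⟩ := hP
  have hγ0 : 0 < γ := hρ.trans hργ
  -- basic facts about α
  have hα_pos : ∀ u : ℝ, 0 < α u := by
    intro u; simp only [hα]
    exact add_pos (mul_pos hl0 (Real.exp_pos _)) (mul_pos (by linarith) (Real.exp_pos _))
  have hα_le1 : ∀ u : ℝ, 0 ≤ u → α u ≤ 1 := by
    intro u hu; simp only [hα]
    have h1 : Real.exp (-ρ * u) ≤ 1 :=
      Real.exp_le_one_iff.mpr (by linarith [mul_nonneg hρ.le hu])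
    have h2 : Real.exp (-γ * u) ≤ 1 :=
      Real.exp_le_one_iff.mpr (by linarith [mul_nonneg hγ0.le hu])
    have h3 : l * Real.exp (-ρ * u) ≤ l * 1 := mul_le_mul_of_nonneg_left h1 hl0.le
    have h4 : (1 - l) * Real.exp (-γ * u) ≤ (1 - l) * 1 :=
      mul_le_mul_of_nonneg_left h2 (by linarith)
    linarith
  have hα0 : α 0 = 1 := by simp only [hα]; norm_num
  set a0 : ℝ := l * Real.exp (-ρ * T) + (1 - l) * Real.exp (-γ * T) with ha0_def
  have ha0 : 0 < a0 :=
    add_pos (mul_pos hl0 (Real.exp_pos _)) (mul_pos (by linarith) (Real.exp_pos _))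
  have hα_lb : ∀ u : ℝ, 0 ≤ u → u ≤ T → a0 ≤ α u := by
    intro u hu huT; simp only [hα, ha0_def]
    have h1 : Real.exp (-ρ * T) ≤ Real.exp (-ρ * u) :=
      Real.exp_le_exp.mpr (by linarith [mul_le_mul_of_nonneg_left huT hρ.le])
    have h2 : Real.exp (-γ * T) ≤ Real.exp (-γ * u) :=
      Real.exp_le_exp.mpr (by linarith [mul_le_mul_of_nonneg_left huT hγ0.le])
    have h3 : l * Real.exp (-ρ * T) ≤ l * Real.exp (-ρ * u) :=
      mul_le_mul_of_nonneg_left h1 hl0.le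
    have h4 : (1 - l) * Real.exp (-γ * T) ≤ (1 - l) * Real.exp (-γ * u) :=
      mul_le_mul_of_nonneg_left h2 (by linarith)
    linarith
  have hα_lip : ∀ u v : ℝ, 0 ≤ u → 0 ≤ v → |α u - α v| ≤ γ * |u - v| := by
    intro u v hu hv
    have e1 : |Real.exp (-ρ * u) - Real.exp (-ρ * v)| ≤ ρ * |u - v| := by
      calc |Real.exp (-ρ * u) - Real.exp (-ρ * v)| ≤ |(-ρ * u) - (-ρ * v)| :=
            abs_exp_sub_exp_le (by linarith [mul_nonneg hρ.le hu])
              (by linarith [mul_nonneg hρ.le hv])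
      _ = ρ * |u - v| := by
          rw [show -ρ * u - -ρ * v = ρ * (v - u) by ring, abs_mul, abs_of_pos hρ, abs_sub_comm]
    have e2 : |Real.exp (-γ * u) - Real.exp (-γ * v)| ≤ γ * |u - v| := by
      calc |Real.exp (-γ * u) - Real.exp (-γ * v)| ≤ |(-γ * u) - (-γ * v)| :=
            abs_exp_sub_exp_le (by linarith [mul_nonneg hγ0.le hu])
              (by linarith [mul_nonneg hγ0.le hv])
      _ = γ * |u - v| := by
          rw [show -γ * u - -γ * v = γ * (v - u) by ring, abs_mul, abs_of_pos hγ0, abs_sub_comm]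
    have key : α u - α v = l * (Real.exp (-ρ * u) - Real.exp (-ρ * v))
        + (1 - l) * (Real.exp (-γ * u) - Real.exp (-γ * v)) := by simp only [hα]; ring
    calc |α u - α v| ≤ l * |Real.exp (-ρ * u) - Real.exp (-ρ * v)|
          + (1 - l) * |Real.exp (-γ * u) - Real.exp (-γ * v)| := by
          rw [key]
          refine (abs_add_le _ _).trans ?_
          rw [abs_mul, abs_mul, abs_of_pos hl0, abs_of_pos (by linarith : (0:ℝ) < 1 - l)]
    _ ≤ γ * |u - v| := by
        have q1 := mul_le_mul_of_nonneg_left e1 hl0.le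
        have q2 := mul_le_mul_of_nonneg_left e2 (by linarith : (0:ℝ) ≤ 1 - l)
        have q3 : 0 ≤ (γ - ρ) * l * |u - v| :=
          mul_nonneg (mul_nonneg (by linarith) hl0.le) (abs_nonneg _)
        linarith
  -- bound on P
  have hΔcpt : IsCompact {p : ℝ × ℝ | 0 ≤ p.1 ∧ p.1 ≤ p.2 ∧ p.2 ≤ T} := by
    refine ((isCompact_Icc (a := (0:ℝ)) (b := T)).prod (isCompact_Icc (a := (0:ℝ)) (b := T))).of_isClosed_subset ?_ ?_
    · have hrw : {p : ℝ × ℝ | 0 ≤ p.1 ∧ p.1 ≤ p.2 ∧ p.2 ≤ T}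
          = {p : ℝ × ℝ | 0 ≤ p.1} ∩ ({p : ℝ × ℝ | p.1 ≤ p.2} ∩ {p : ℝ × ℝ | p.2 ≤ T}) := by
        ext p; simp [Set.mem_setOf_eq, and_assoc]
      rw [hrw]
      exact (isClosed_le continuous_const continuous_fst).inter
        ((isClosed_le continuous_fst continuous_snd).inter
          (isClosed_le continuous_snd continuous_const))
    · rintro ⟨x, y⟩ ⟨h1, h2, h3⟩
      exact Set.mk_mem_prod ⟨h1, h2.trans h3⟩ ⟨h1.trans h2, h3⟩
  obtain ⟨M0, hM0⟩ := hΔcpt.exists_bound_of_continuousOn hcont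
  set M : ℝ := max M0 1 with hM_def
  have hM1 : (1:ℝ) ≤ M := le_max_right _ _
  have hM_pos : (0:ℝ) < M := by linarith
  have hM : ∀ t s : ℝ, 0 ≤ t → t ≤ s → s ≤ T → |P t s| ≤ M := by
    intro t s h1 h2 h3
    have := hM0 (t, s) ⟨h1, h2, h3⟩
    rw [Real.norm_eq_abs] at this
    exact this.trans (le_max_left _ _)
  have hPss : ∀ s : ℝ, 0 ≤ s → s ≤ T → |P s s| ≤ M := fun s h1 h2 => hM s s h1 le_rfl h2
  -- constants
  set c : ℝ := (1 - R) / R with hc_def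
  have hc0 : 0 ≤ c := div_nonneg (by linarith) hR0.le
  set Ka : ℝ := σ ^ 2 + 2 * c * M with hKa_def
  have hKa0 : 0 ≤ Ka := by
    rw [hKa_def]
    linarith [sq_nonneg σ, mul_nonneg hc0 hM_pos.le]
  have hA : ∀ s : ℝ, 0 ≤ s → s ≤ T → |σ ^ 2 - 2 * c * P s s| ≤ Ka := by
    intro s h1 h2
    have habs := abs_le.mp (hPss s h1 h2)
    rw [abs_le]
    constructor <;>
      linarith [sq_nonneg σ, mul_le_mul_of_nonneg_left habs.1 hc0,
        mul_le_mul_of_nonneg_left habs.2 hc0]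
  have hPs_eq : ∀ t ∈ Set.Icc (0:ℝ) T, ∀ s ∈ Set.Icc t T,
      Ps t s = -((σ ^ 2 - 2 * c * P s s) * P t s) - α (s - t) * (c * (P s s) ^ 2) := by
    intro t ht s hs
    have := (heq t ht s hs).2
    rw [hc_def]
    linarith
  -- positivity of P
  have hPpos : ∀ t ∈ Set.Icc (0:ℝ) T, ∀ s ∈ Set.Icc t T, 0 < P t s := by
    intro t ht s hs
    have hfb : 0 < P t T := by rw [hterm t ht]; exact hα_pos _
    refine pos_on_of_riccati (Kb := Ka) (ht.2) (fun x hx => (heq t ht x hx).1) ?_ hfb s hs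
    intro x hx hfx
    have hA' := abs_le.mp (hA x (ht.1.trans hx.1) hx.2)
    rw [hPs_eq t ht x hx]
    have hq1 : 0 ≤ α (x - t) * (c * (P x x) ^ 2) :=
      mul_nonneg (hα_pos _).le (mul_nonneg hc0 (sq_nonneg _))
    linarith [mul_nonneg (by linarith [hA'.1, hA'.2] : (0:ℝ) ≤ Ka + (σ ^ 2 - 2 * c * P x x)) hfx]
  -- Lipschitz in t
  set L2 : ℝ := γ * (1 + c * M ^ 2 * T) * Real.exp ((Ka + 1) * T) with hL2_def
  have hL2_0 : 0 ≤ L2 := by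
    rw [hL2_def]
    have h1 : (0:ℝ) ≤ 1 + c * M ^ 2 * T := by
      have := mul_nonneg (mul_nonneg hc0 (sq_nonneg M)) hT.le
      linarith
    exact mul_nonneg (mul_nonneg hγ0.le h1) (Real.exp_pos _).le
  have hLipT : ∀ t t' s : ℝ, 0 ≤ t → t ≤ t' → t' ≤ s → s ≤ T →
      |P t s - P t' s| ≤ L2 * (t' - t) := by
    intro t t' s ht0 htt' ht's hsT
    have ht : t ∈ Set.Icc (0:ℝ) T := ⟨ht0, (htt'.trans ht's).trans hsT⟩
    have ht' : t' ∈ Set.Icc (0:ℝ) T := ⟨ht0.trans htt', ht's.trans hsT⟩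
    have hKpos : (0:ℝ) < Ka + 1 := by linarith
    have key := gronwall_backward (f := fun s => P t s - P t' s)
        (f' := fun s => Ps t s - Ps t' s) (a := t') (b := T)
        (δ := γ * (t' - t)) (K := Ka + 1) (ε := γ * (t' - t) * (c * M ^ 2))
        (ht's.trans hsT)
        (fun x hx => ((heq t ht x ⟨htt'.trans hx.1, hx.2⟩).1.mono
          (Set.Icc_subset_Icc htt' le_rfl)).sub ((heq t' ht' x hx).1))
        ?_ ?_
    · have hδ0 : 0 ≤ γ * (t' - t) := mul_nonneg hγ0.le (by linarith)
      have hε0 : 0 ≤ γ * (t' - t) * (c * M ^ 2) :=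
        mul_nonneg hδ0 (mul_nonneg hc0 (sq_nonneg _))
      have h1 := key s ⟨ht's, hsT⟩
      have h2 := gronwallBound_le_simple (δ := γ * (t' - t)) (K := Ka + 1)
          (e := γ * (t' - t) * (c * M ^ 2)) (x := T - s) hKpos hδ0 hε0 (by linarith)
      have g1 : γ * (t' - t) + γ * (t' - t) * (c * M ^ 2) * (T - s) ≤
          γ * (t' - t) + γ * (t' - t) * (c * M ^ 2) * T := by
        have hs0 : (0:ℝ) ≤ s := by linarith
        linarith [mul_nonneg (mul_nonneg hδ0 (mul_nonneg hc0 (sq_nonneg M))) hs0]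
      have g2 : Real.exp ((Ka + 1) * (T - s)) ≤ Real.exp ((Ka + 1) * T) :=
        Real.exp_le_exp.mpr (by
          have hs0 : (0:ℝ) ≤ s := by linarith
          linarith [mul_nonneg (by linarith : (0:ℝ) ≤ Ka + 1) hs0])
      have g3 : (γ * (t' - t) + γ * (t' - t) * (c * M ^ 2) * (T - s)) *
            Real.exp ((Ka + 1) * (T - s)) ≤
          (γ * (t' - t) + γ * (t' - t) * (c * M ^ 2) * T) * Real.exp ((Ka + 1) * T) := by
        apply mul_le_mul g1 g2 (Real.exp_pos _).le
          (by linarith [hδ0, mul_nonneg hε0 hT.le])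
      have g4 : (γ * (t' - t) + γ * (t' - t) * (c * M ^ 2) * T) * Real.exp ((Ka + 1) * T)
          = L2 * (t' - t) := by rw [hL2_def]; ring
      calc |P t s - P t' s| ≤ gronwallBound (γ * (t' - t)) (Ka + 1)
            (γ * (t' - t) * (c * M ^ 2)) (T - s) := h1
      _ ≤ (γ * (t' - t) + γ * (t' - t) * (c * M ^ 2) * (T - s)) *
            Real.exp ((Ka + 1) * (T - s)) := h2
      _ ≤ L2 * (t' - t) := by rw [← g4]; exact g3
    · -- terminal bound
      have h1 := hα_lip (T - t) (T - t') (by linarith) (by linarith)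
      rw [show |(T - t) - (T - t')| = t' - t by
        rw [show (T - t) - (T - t') = t' - t by ring, abs_of_nonneg (by linarith)]] at h1
      show |P t T - P t' T| ≤ γ * (t' - t)
      rw [hterm t ht, hterm t' ht']
      exact h1
    · -- derivative bound
      intro x hx
      have hxt : x ∈ Set.Icc t T := ⟨htt'.trans hx.1, hx.2⟩
      have hx0 : 0 ≤ x := ht0.trans hxt.1
      have hd : Ps t x - Ps t' x =
          -((σ ^ 2 - 2 * c * P x x) * (P t x - P t' x)) +
          -((α (x - t) - α (x - t')) * (c * (P x x) ^ 2)) := by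
        rw [hPs_eq t ht x hxt, hPs_eq t' ht' x hx]; ring
      have h1 : |(σ ^ 2 - 2 * c * P x x) * (P t x - P t' x)| ≤ (Ka + 1) * |P t x - P t' x| := by
        rw [abs_mul]
        apply mul_le_mul_of_nonneg_right _ (abs_nonneg _)
        exact (hA x hx0 hx.2).trans (by linarith)
      have h2 : |(α (x - t) - α (x - t')) * (c * (P x x) ^ 2)| ≤
          γ * (t' - t) * (c * M ^ 2) := by
        rw [abs_mul]
        have hlip := hα_lip (x - t) (x - t') (by linarith [hx.1]) (by linarith [hx.1])
        rw [show |(x - t) - (x - t')| = t' - t by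
          rw [show (x - t) - (x - t') = t' - t by ring, abs_of_nonneg (by linarith)]] at hlip
        have hsq : |c * (P x x) ^ 2| ≤ c * M ^ 2 := by
          rw [abs_of_nonneg (mul_nonneg hc0 (sq_nonneg _))]
          have hm := abs_le.mp (hPss x hx0 hx.2)
          have h2 : (P x x) ^ 2 ≤ M ^ 2 := by
            nlinarith [mul_nonneg (by linarith [hm.2] : (0:ℝ) ≤ M - P x x)
              (by linarith [hm.1] : (0:ℝ) ≤ M + P x x)]
          exact mul_le_mul_of_nonneg_left h2 hc0
        exact mul_le_mul hlip hsq (abs_nonneg _) (mul_nonneg hγ0.le (by linarith))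
      show |Ps t x - Ps t' x| ≤ (Ka + 1) * |P t x - P t' x| + γ * (t' - t) * (c * M ^ 2)
      rw [hd]
      calc |(-((σ ^ 2 - 2 * c * P x x) * (P t x - P t' x))) +
            (-((α (x - t) - α (x - t')) * (c * (P x x) ^ 2)))|
          ≤ |(-((σ ^ 2 - 2 * c * P x x) * (P t x - P t' x)))| +
            |(-((α (x - t) - α (x - t')) * (c * (P x x) ^ 2)))| := abs_add_le _ _
      _ = |(σ ^ 2 - 2 * c * P x x) * (P t x - P t' x)| +
            |(α (x - t) - α (x - t')) * (c * (P x x) ^ 2)| := by rw [abs_neg, abs_neg]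
      _ ≤ (Ka + 1) * |P t x - P t' x| + γ * (t' - t) * (c * M ^ 2) := add_le_add h1 h2
  -- further constants
  set B : ℝ := M * Real.exp (σ ^ 2 * T) with hB_def
  have hexpT : (1:ℝ) ≤ Real.exp (σ ^ 2 * T) :=
    Real.one_le_exp (mul_nonneg (sq_nonneg σ) hT.le)
  have hMB : M ≤ B := by
    rw [hB_def]
    linarith [mul_le_mul_of_nonneg_left hexpT hM_pos.le]
  have hB_pos : 0 < B := by rw [hB_def]; exact mul_pos hM_pos (Real.exp_pos _)
  set C1 : ℝ := L2 + γ * M with hC1_def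
  have hC1_0 : 0 ≤ C1 := by rw [hC1_def]; linarith [mul_pos hγ0 hM_pos]
  set K1 : ℝ := Ka + 2 * B * c / a0 + 1 with hK1_def
  have hK1_pos : 0 < K1 := by
    rw [hK1_def]
    have : 0 ≤ 2 * B * c / a0 :=
      div_nonneg (mul_nonneg (mul_nonneg (by norm_num) hB_pos.le) hc0) ha0.le
    linarith
  set C2 : ℝ := 2 * B * c * C1 / a0 + 1 with hC2_def
  have hC2_pos : 0 < C2 := by
    rw [hC2_def]
    have : 0 ≤ 2 * B * c * C1 / a0 :=
      div_nonneg (mul_nonneg (mul_nonneg (mul_nonneg (by norm_num) hB_pos.le) hc0) hC1_0) ha0.le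
    linarith
  set C3 : ℝ := C2 * Real.exp (K1 * T) with hC3_def
  have hC3_pos : 0 < C3 := by rw [hC3_def]; exact mul_pos hC2_pos (Real.exp_pos _)
  refine ⟨C3 * T + L2 + C3 + 1, by linarith [mul_pos hC3_pos hT, hL2_0, hC3_pos], ?_⟩
  intro t ht ε hε Pt Pt' hPt hPtb
  obtain ⟨ht0, htT⟩ := ht
  obtain ⟨hε0, hεT⟩ := hε
  have htb : t < t + ε := by linarith
  have hbT : t + ε ≤ T := by linarith
  have hεle : ε ≤ T := by linarith
  have htmem : t ∈ Set.Icc (0:ℝ) T := ⟨ht0, htT.le⟩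
  have hsub : Set.Icc t (t + ε) ⊆ Set.Icc t T := Set.Icc_subset_Icc le_rfl hbT
  have hα_lb' : ∀ s ∈ Set.Icc t (t + ε), a0 ≤ α (s - t) :=
    fun s hs => hα_lb (s - t) (by linarith [hs.1]) (by linarith [hs.2])
  have hα_ub' : ∀ s ∈ Set.Icc t (t + ε), α (s - t) ≤ 1 :=
    fun s hs => hα_le1 (s - t) (by linarith [hs.1])
  have hPt_eq : ∀ s ∈ Set.Icc t (t + ε),
      Pt' s = -(σ ^ 2 * Pt s) + c / α (s - t) * (Pt s) ^ 2 := by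
    intro s hs
    have h2 := (hPt s hs).2
    have hrw : c / α (s - t) = (1 - R) / (α (s - t) * R) := by
      rw [hc_def, div_div, mul_comm]
    rw [hrw]
    linarith
  have hPtb_pos : 0 < Pt (t + ε) := by
    rw [hPtb]; exact hPpos t htmem (t + ε) ⟨htb.le, hbT⟩
  -- positivity of Pt
  obtain ⟨N, hN⟩ := (isCompact_Icc (a := t) (b := t + ε)).exists_bound_of_continuousOn
      (fun s hs => ((hPt s hs).1).continuousWithinAt)
  have hPt_pos : ∀ s ∈ Set.Icc t (t + ε), 0 < Pt s := by
    refine pos_on_of_riccati (Kb := c / a0 * max N 0) htb.le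
      (fun s hs => (hPt s hs).1) ?_ hPtb_pos
    intro x hx hfx
    rw [hPt_eq x hx]
    have hdiv : c / α (x - t) ≤ c / a0 := div_le_div_of_nonneg_left hc0 ha0 (hα_lb' x hx)
    have hx2 : Pt x ≤ max N 0 := by
      have h := hN x hx
      rw [Real.norm_eq_abs] at h
      exact (le_abs_self _).trans (h.trans (le_max_left _ _))
    have q1 : c / α (x - t) * Pt x ^ 2 ≤ c / a0 * Pt x ^ 2 :=
      mul_le_mul_of_nonneg_right hdiv (sq_nonneg _)
    have q2 : Pt x ^ 2 ≤ max N 0 * Pt x := by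
      have := mul_le_mul_of_nonneg_right hx2 hfx
      calc Pt x ^ 2 = Pt x * Pt x := sq (Pt x) ▸ rfl
        _ ≤ max N 0 * Pt x := this
    have q3 : c / a0 * Pt x ^ 2 ≤ c / a0 * (max N 0 * Pt x) :=
      mul_le_mul_of_nonneg_left q2 (div_nonneg hc0 ha0.le)
    linarith [mul_nonneg (sq_nonneg σ) hfx, q1, q3]
  -- upper bound for Pt
  have hmono : MonotoneOn (fun s => Pt s * Real.exp (-(-σ ^ 2) * s)) (Set.Icc t (t + ε)) := by
    apply monotoneOn_mul_exp (fun s hs => (hPt s hs).1)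
    intro x hx
    rw [hPt_eq x ⟨hx.1.le, hx.2.le⟩]
    have h1 : 0 ≤ c / α (x - t) * Pt x ^ 2 :=
      mul_nonneg (div_nonneg hc0 (hα_pos _).le) (sq_nonneg _)
    linarith
  have hPt_ub : ∀ s ∈ Set.Icc t (t + ε), Pt s ≤ B := by
    intro s hs
    have h1 := hmono hs (Set.right_mem_Icc.mpr htb.le) hs.2
    simp only [neg_neg] at h1
    have h2 : Pt (t + ε) ≤ M := by
      rw [hPtb]
      exact le_of_abs_le (hM t (t + ε) ht0 htb.le hbT)
    have h3 : (1:ℝ) ≤ Real.exp (σ ^ 2 * s) :=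
      Real.one_le_exp (mul_nonneg (sq_nonneg σ) (by linarith [hs.1]))
    have h4 : Real.exp (σ ^ 2 * (t + ε)) ≤ Real.exp (σ ^ 2 * T) :=
      Real.exp_le_exp.mpr (mul_le_mul_of_nonneg_left hbT (sq_nonneg σ))
    have h5 : Pt (t + ε) * Real.exp (σ ^ 2 * (t + ε)) ≤ M * Real.exp (σ ^ 2 * T) :=
      mul_le_mul h2 h4 (Real.exp_pos _).le hM_pos.le
    have h6 := hPt_pos s hs
    rw [hB_def]
    linarith [h1, h5,
      mul_nonneg (by linarith [h3] : (0:ℝ) ≤ Real.exp (σ ^ 2 * s) - 1) h6.le]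
  -- the final Gronwall comparison
  have hD : ∀ x ∈ Set.Icc t (t + ε),
      HasDerivWithinAt (fun s => Pt s - P t s) (Pt' x - Ps t x) (Set.Icc t (t + ε)) x :=
    fun x hx => ((hPt x hx).1).sub (((heq t htmem x (hsub hx)).1).mono hsub)
  have hDb : |Pt (t + ε) - P t (t + ε)| ≤ 0 := by rw [hPtb]; simp
  have hbound : ∀ x ∈ Set.Icc t (t + ε),
      |Pt' x - Ps t x| ≤ K1 * |Pt x - P t x| + C2 * ε := by
    intro x hx
    have hxt : x ∈ Set.Icc t T := hsub hx
    have hx0 : 0 ≤ x := ht0.trans hxt.1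
    have hαpos : 0 < α (x - t) := hα_pos _
    have hid : Pt' x - Ps t x = (2 * c * P x x - σ ^ 2) * (Pt x - P t x)
        + c / α (x - t) * (Pt x - α (x - t) * P x x) ^ 2 := by
      rw [hPt_eq x hx, hPs_eq t htmem x hxt]
      field_simp
      ring
    have l3 : |P x x| ≤ M := hPss x hx0 hxt.2
    have hr : |P t x - α (x - t) * P x x| ≤ C1 * ε := by
      have l1 : |P t x - P x x| ≤ L2 * (x - t) := hLipT t x x ht0 hx.1 le_rfl hxt.2
      have l2 : |1 - α (x - t)| ≤ γ * (x - t) := by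
        have h := hα_lip 0 (x - t) le_rfl (by linarith [hx.1])
        rw [hα0] at h
        rw [show |(0:ℝ) - (x - t)| = x - t by
          rw [zero_sub, abs_neg, abs_of_nonneg (by linarith [hx.1] : (0:ℝ) ≤ x - t)]] at h
        exact h
      have l4 : |(1 - α (x - t)) * P x x| ≤ γ * (x - t) * M := by
        rw [abs_mul]
        exact mul_le_mul l2 l3 (abs_nonneg _) (mul_nonneg hγ0.le (by linarith [hx.1]))
      calc |P t x - α (x - t) * P x x|
          = |(P t x - P x x) + (1 - α (x - t)) * P x x| := by ring_nf
        _ ≤ |P t x - P x x| + |(1 - α (x - t)) * P x x| := abs_add_le _ _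
        _ ≤ L2 * (x - t) + γ * (x - t) * M := add_le_add l1 l4
        _ ≤ C1 * ε := by
            rw [hC1_def]
            have hxε : x - t ≤ ε := by linarith [hx.2]
            linarith [mul_le_mul_of_nonneg_left hxε hL2_0,
              mul_le_mul_of_nonneg_left hxε (mul_pos hγ0 hM_pos).le]
    have habsPt : |Pt x - α (x - t) * P x x| ≤ 2 * B := by
      have p1 := hPt_pos x hx
      have p2 := hPt_ub x hx
      have l4 : |α (x - t) * P x x| ≤ M := by
        rw [abs_mul, abs_of_pos hαpos]
        calc α (x - t) * |P x x| ≤ 1 * M :=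
              mul_le_mul (hα_ub' x hx) l3 (abs_nonneg _) zero_le_one
        _ = M := one_mul M
      have l5 := abs_le.mp l4
      rw [abs_le]
      constructor <;> linarith [l5.1, l5.2, hMB, hB_pos]
    have hsum : |Pt x - α (x - t) * P x x| ≤ |Pt x - P t x| + C1 * ε := by
      calc |Pt x - α (x - t) * P x x|
          = |(Pt x - P t x) + (P t x - α (x - t) * P x x)| := by ring_nf
        _ ≤ |Pt x - P t x| + |P t x - α (x - t) * P x x| := abs_add_le _ _
        _ ≤ |Pt x - P t x| + C1 * ε := by linarith [hr]
    have hsq : (Pt x - α (x - t) * P x x) ^ 2 ≤ 2 * B * (|Pt x - P t x| + C1 * ε) := by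
      rw [pow_two, ← abs_mul_abs_self]
      exact mul_le_mul habsPt hsum (abs_nonneg _) (by linarith [hB_pos])
    have hdiv : c / α (x - t) ≤ c / a0 := div_le_div_of_nonneg_left hc0 ha0 (hα_lb' x hx)
    have hA' : |2 * c * P x x - σ ^ 2| ≤ Ka := by
      rw [abs_sub_comm]; exact hA x hx0 hxt.2
    rw [hid]
    have e1 : |(2 * c * P x x - σ ^ 2) * (Pt x - P t x)| ≤ Ka * |Pt x - P t x| := by
      rw [abs_mul]; exact mul_le_mul_of_nonneg_right hA' (abs_nonneg _)
    have e2 : |c / α (x - t) * (Pt x - α (x - t) * P x x) ^ 2|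
        ≤ c / a0 * (2 * B * (|Pt x - P t x| + C1 * ε)) := by
      rw [abs_mul, abs_of_nonneg (div_nonneg hc0 hαpos.le), abs_of_nonneg (sq_nonneg _)]
      exact mul_le_mul hdiv hsq (sq_nonneg _) (div_nonneg hc0 ha0.le)
    calc |(2 * c * P x x - σ ^ 2) * (Pt x - P t x)
          + c / α (x - t) * (Pt x - α (x - t) * P x x) ^ 2|
        ≤ |(2 * c * P x x - σ ^ 2) * (Pt x - P t x)|
          + |c / α (x - t) * (Pt x - α (x - t) * P x x) ^ 2| := abs_add_le _ _
      _ ≤ Ka * |Pt x - P t x| + c / a0 * (2 * B * (|Pt x - P t x| + C1 * ε)) :=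
          add_le_add e1 e2
      _ ≤ K1 * |Pt x - P t x| + C2 * ε := by
          rw [hK1_def, hC2_def]
          have q1 : c / a0 * (2 * B * (|Pt x - P t x| + C1 * ε))
              = (2 * B * c / a0) * |Pt x - P t x| + (2 * B * c * C1 / a0) * ε := by ring
          rw [q1]
          linarith [abs_nonneg (Pt x - P t x), hε0.le]
  have key := gronwall_backward htb.le hD hDb hbound
  have hDle : ∀ x ∈ Set.Icc t (t + ε), |Pt x - P t x| ≤ C3 * ε ^ 2 := by
    intro x hx
    have hbx0 : 0 ≤ t + ε - x := by linarith [hx.2]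
    have hbxε : t + ε - x ≤ ε := by linarith [hx.1]
    have hC2ε : 0 ≤ C2 * ε := mul_nonneg hC2_pos.le hε0.le
    calc |Pt x - P t x| ≤ gronwallBound 0 K1 (C2 * ε) (t + ε - x) := key x hx
      _ ≤ (0 + C2 * ε * (t + ε - x)) * Real.exp (K1 * (t + ε - x)) :=
          gronwallBound_le_simple hK1_pos le_rfl hC2ε hbx0
      _ ≤ (C2 * ε * ε) * Real.exp (K1 * T) := by
          apply mul_le_mul ?_ (Real.exp_le_exp.mpr ?_) (Real.exp_pos _).le ?_
          · linarith [mul_le_mul_of_nonneg_left hbxε hC2ε]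
          · linarith [mul_le_mul_of_nonneg_left
              (show t + ε - x ≤ T by linarith) hK1_pos.le]
          · linarith [mul_nonneg hC2ε hε0.le]
      _ = C3 * ε ^ 2 := by rw [hC3_def]; ring
  constructor
  · intro s hs
    have hD1 := hDle s hs
    have q1 : C3 * ε ^ 2 ≤ C3 * T * ε := by
      linarith [mul_nonneg (mul_nonneg hC3_pos.le hε0.le) (by linarith : (0:ℝ) ≤ T - ε)]
    constructor
    · have q2 : 0 ≤ L2 * ε := mul_nonneg hL2_0 hε0.le
      have q3 : 0 ≤ C3 * ε := mul_nonneg hC3_pos.le hε0.le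
      linarith [hD1, hε0.le]
    · have l1 : |P t s - P s s| ≤ L2 * (s - t) := hLipT t s s ht0 hs.1 le_rfl (hs.2.trans hbT)
      have q2 : L2 * (s - t) ≤ L2 * ε := mul_le_mul_of_nonneg_left (by linarith [hs.2]) hL2_0
      have q3 : 0 ≤ C3 * ε := mul_nonneg hC3_pos.le hε0.le
      calc |Pt s - P s s| = |(Pt s - P t s) + (P t s - P s s)| := by ring_nf
        _ ≤ |Pt s - P t s| + |P t s - P s s| := abs_add_le _ _
        _ ≤ C3 * ε ^ 2 + L2 * (s - t) := add_le_add hD1 l1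
        _ ≤ (C3 * T + L2 + C3 + 1) * ε := by linarith [q1, q2, q3, hε0.le]
  · have hD1 := hDle t (Set.left_mem_Icc.mpr htb.le)
    have q1 : 0 ≤ (C3 * T + L2 + 1) * ε ^ 2 := by
      apply mul_nonneg _ (sq_nonneg ε)
      linarith [mul_pos hC3_pos hT, hL2_0]
    linarith [hD1, q1]
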